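/- For every continuous function φ on ℝ with compact support, lim_{q → -1⁺} (1/Γ(q+1)) ∫₀^∞ r^q φ(r) dr = φ(0). -/

import Mathlib

open MeasureTheory Metric Filter Pointwise
set_option synthInstance.maxHeartbeats 1000000
set_option maxHeartbeats 1000000
noncomputable section

/-- ℂⁿ with its Euclidean structure (≅ ℝ²ⁿ as a real inner product space). -/
abbrev Cn (n : ℕ) := EuclideanSpace ℂ (Fin n)

instance {n : ℕ} : MeasurableSpace (Cn n) := WithLp.measurableSpace 2 (Fin n → ℂ)
instance {n : ℕ} : BorelSpace (Cn n) := PiLp.borelSpace 2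
instance {n : ℕ} : InnerProductSpace ℝ (Cn n) := InnerProductSpace.complexToReal
instance {n : ℕ} (W : Submodule ℂ (Cn n)) : InnerProductSpace ℝ W :=
  InnerProductSpace.complexToReal

/-- The complex inner product `x · u`, conjugate-linear in `u`
(so that `x · (λ u) = conj λ (x · u)`), whose real part is the real
inner product `⟨x,u⟩` on ℂⁿ ≅ ℝ²ⁿ. -/
def dotC {n : ℕ} (x u : Cn n) : ℂ := inner ℂ u x

/-- Support function of a set `C ⊆ ℂ ≅ ℝ²` at `z`:  `h_C(z) = sup_{c ∈ C} ⟨c, z⟩`. -/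
def hsC (C : Set ℂ) (z : ℂ) : ℝ := sSup ((fun c => ((starRingEnd ℂ) c * z).re) '' C)

/-- Radial function of a set. -/
def radial {E : Type*} [SMul ℝ E] (K : Set E) (x : E) : ℝ :=
  sSup {t : ℝ | 0 ≤ t ∧ t • x ∈ K}

/-- `K` is a star body: compact, star-shaped about the origin, with continuous positive
radial function. -/
def IsStarBody {n : ℕ} (K : Set (Cn n)) : Prop :=
  IsCompact K ∧ (∀ x ∈ K, ∀ t : ℝ, 0 ≤ t → t ≤ 1 → t • x ∈ K) ∧
    (Continuous fun v : sphere (0 : Cn n) 1 => radial K (v : Cn n)) ∧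
    (∀ x : Cn n, x ≠ 0 → 0 < radial K x)

/-- Spherical Lebesgue (surface) measure on the unit sphere `S^{2n-1} ⊆ ℂⁿ`. -/
def sphMeas (n : ℕ) : Measure (sphere (0 : Cn n) 1) := (volume : Measure (Cn n)).toSphere

/-- Arc-length measure on the unit circle `S¹ ⊆ ℂ`. -/
def circMeas : Measure (sphere (0 : ℂ) 1) := (volume : Measure ℂ).toSphere

/-- Dimension of a subset of ℂ (dimension of the direction of its affine span). -/
def dimC (C : Set ℂ) : ℕ := Module.finrank ℝ (affineSpan ℝ C).direction

/-- lim_{q → -1⁺} (1/Γ(q+1)) ∫₀^∞ r^q φ(r) dr = φ(0). -/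
theorem tendsto_gamma_normalized_power_integral (φ : ℝ → ℝ)
    (hφ : Continuous φ) (hsupp : HasCompactSupport φ) :
    Tendsto (fun q : ℝ => (Real.Gamma (q + 1))⁻¹ * ∫ r in Set.Ioi (0 : ℝ), r ^ q * φ r)
      (nhdsWithin (-1) (Set.Ioi (-1))) (nhds (φ 0)) := by
  -- bound on φ
  obtain ⟨x₀, hx₀⟩ := (hφ.norm).exists_forall_ge_of_hasCompactSupport hsupp.norm
  set C : ℝ := ‖φ x₀‖ with hCdef
  have hC0 : 0 ≤ C := norm_nonneg _
  -- support radius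
  obtain ⟨R, hR0, hR⟩ := hsupp.exists_pos_le_norm
  set M : ℝ := max R 1 with hMdef
  have hM1 : (1:ℝ) ≤ M := le_max_right _ _
  have hMR : R ≤ M := le_max_left _ _
  have hφM : ∀ x : ℝ, M ≤ x → φ x = 0 := fun x hx => hR x (by
    rw [Real.norm_eq_abs]; exact hMR.trans (hx.trans (le_abs_self x)))
  -- the transformed family
  set F : ℝ → ℝ := fun ε => ∫ u in Set.Ioi (0:ℝ), φ (u ^ (1/ε)) with hFdef
  -- limit function
  set g : ℝ → ℝ := Set.indicator (Set.Ioo (0:ℝ) 1) (fun _ => φ 0) with hgdef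
  have hg_int : ∫ u in Set.Ioi (0:ℝ), g u = φ 0 := by
    rw [hgdef, setIntegral_indicator measurableSet_Ioo]
    rw [Set.inter_comm, Set.Ioo_inter_Ioi]
    simp [Real.volume_Ioo]
  -- Step 1: dominated convergence
  have h1 : Tendsto F (nhdsWithin 0 (Set.Ioi 0)) (nhds (φ 0)) := by
    rw [← hg_int]
    apply tendsto_integral_filter_of_dominated_convergence
      (bound := Set.indicator (Set.Ioc (0:ℝ) M) (fun _ => C))
    · -- measurability
      filter_upwards [self_mem_nhdsWithin] with ε (hε : (0:ℝ) < ε)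
      apply ContinuousOn.aestronglyMeasurable _ measurableSet_Ioi
      intro u hu
      exact (hφ.continuousAt.comp
        (Real.continuousAt_rpow_const u _ (Or.inl (ne_of_gt hu)))).continuousWithinAt
    · -- bound
      filter_upwards [Ioo_mem_nhdsGT_of_mem (by norm_num : (0:ℝ) ∈ Set.Ico 0 1)] with ε hε
      refine (ae_restrict_iff' measurableSet_Ioi).2 (Filter.Eventually.of_forall fun u hu => ?_)
      have hu0 : (0:ℝ) < u := hu
      by_cases huM : u ≤ M
      · rw [Set.indicator_of_mem (Set.mem_Ioc.2 ⟨hu0, huM⟩)]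
        exact hx₀ _
      · push_neg at huM
        rw [Set.indicator_of_notMem (by simp [not_and, huM.not_ge])]
        have h1u : (1:ℝ) ≤ u := hM1.trans huM.le
        have hexp : (1:ℝ) ≤ 1/ε := by
          rw [le_div_iff₀ hε.1]; linarith [hε.2]
        have : u ≤ u ^ (1/ε) := by
          calc u = u ^ (1:ℝ) := (Real.rpow_one u).symm
          _ ≤ u ^ (1/ε) := Real.rpow_le_rpow_of_exponent_le h1u hexp
        rw [hφM _ (le_trans huM.le this)]
        simp
    · -- bound integrable
      rw [integrable_indicator_iff measurableSet_Ioc]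
      exact integrableOn_const measure_Ioc_lt_top.ne
    · -- pointwise limit a.e.
      have hae : ∀ᵐ u ∂(volume.restrict (Set.Ioi (0:ℝ))), u ≠ 1 := by
        refine ae_restrict_of_ae ?_
        refine (ae_iff.2 ?_)
        simpa using (by simp : volume ({(1:ℝ)}) = 0)
      filter_upwards [hae, ae_restrict_mem measurableSet_Ioi] with u hu1 hu0
      have hu0 : (0:ℝ) < u := hu0
      have hinv : Tendsto (fun ε : ℝ => 1/ε) (nhdsWithin 0 (Set.Ioi 0)) atTop := by
        simpa [one_div] using tendsto_inv_nhdsGT_zero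
      rcases lt_or_gt_of_ne hu1 with hlt | hgt
      · -- u < 1 : u^(1/ε) → 0, φ ∘ → φ 0
        have htend : Tendsto (fun ε : ℝ => u ^ (1/ε)) (nhdsWithin 0 (Set.Ioi 0)) (nhds 0) := by
          have := tendsto_rpow_atTop_of_base_lt_one u (by linarith) hlt
          exact this.comp hinv
        have : Tendsto (fun ε : ℝ => φ (u ^ (1/ε))) (nhdsWithin 0 (Set.Ioi 0)) (nhds (φ 0)) :=
          (hφ.continuousAt.tendsto).comp htend
        simpa [hgdef, Set.indicator_of_mem, Set.mem_Ioo, hu0, hlt] using this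
      · -- u > 1 : u^(1/ε) → ∞, eventually φ = 0
        have hg0 : g u = 0 := Set.indicator_of_notMem (by simp [hgt.not_gt]) _
        rw [hg0]
        have hbase : Tendsto (fun x : ℝ => u ^ x) atTop atTop := by
          simp_rw [Real.rpow_def_of_pos hu0]
          exact Real.tendsto_exp_atTop.comp (tendsto_id.const_mul_atTop (Real.log_pos hgt))
        have htend : Tendsto (fun ε : ℝ => u ^ (1/ε)) (nhdsWithin 0 (Set.Ioi 0)) atTop :=
          hbase.comp hinv
        have hev : ∀ᶠ ε : ℝ in nhdsWithin 0 (Set.Ioi 0), φ (u ^ (1/ε)) = (0:ℝ) := by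
          filter_upwards [htend.eventually_ge_atTop M] with ε hε
          exact hφM _ hε
        exact Tendsto.congr' (hev.mono fun ε h => h.symm) tendsto_const_nhds
  -- Step 2: change of variables
  have h2 : ∀ ε : ℝ, 0 < ε → F ε = ε * ∫ r in Set.Ioi (0:ℝ), r ^ (ε - 1) * φ r := by
    intro ε hε
    have key := MeasureTheory.integral_comp_rpow_Ioi (fun u => φ (u ^ (1/ε))) (ne_of_gt hε)
    rw [hFdef]
    dsimp only
    rw [← key]
    rw [← integral_const_mul]
    apply setIntegral_congr_fun measurableSet_Ioi
    intro x hx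
    have hx0 : (0:ℝ) < x := hx
    beta_reduce
    rw [← Real.rpow_mul hx0.le, mul_one_div_cancel (ne_of_gt hε), Real.rpow_one,
      abs_of_pos hε, smul_eq_mul]
    ring
  -- Step 3: assemble
  have hΓ1 : ContinuousAt Real.Gamma 1 :=
    (Real.differentiableAt_Gamma (fun m => by
      have : (0:ℝ) ≤ m := m.cast_nonneg
      exact ne_of_gt (by linarith))).continuousAt
  have hΓ : Tendsto (fun q : ℝ => (Real.Gamma (q + 2))⁻¹)
      (nhdsWithin (-1) (Set.Ioi (-1))) (nhds 1) := by
    have hadd2 : Tendsto (fun q : ℝ => q + 2) (nhdsWithin (-1) (Set.Ioi (-1))) (nhds 1) := by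
      have h' : Tendsto (fun q : ℝ => q + 2) (nhds (-1)) (nhds ((-1) + 2)) :=
        tendsto_id.add tendsto_const_nhds
      norm_num at h'
      exact h'.mono_left nhdsWithin_le_nhds
    have hcomp := (hΓ1.tendsto).comp hadd2
    have := hcomp.inv₀ (by simp [Real.Gamma_one])
    simpa [Real.Gamma_one] using this
  have hadd : Tendsto (fun q : ℝ => q + 1) (nhdsWithin (-1) (Set.Ioi (-1)))
      (nhdsWithin 0 (Set.Ioi 0)) := by
    rw [tendsto_nhdsWithin_iff]
    constructor
    · have h' : Tendsto (fun q : ℝ => q + 1) (nhds (-1)) (nhds ((-1) + 1)) :=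
        tendsto_id.add tendsto_const_nhds
      norm_num at h'
      exact h'.mono_left nhdsWithin_le_nhds
    · filter_upwards [self_mem_nhdsWithin] with q hq
      simp only [Set.mem_Ioi] at hq ⊢
      linarith
  have hmain : Tendsto (fun q : ℝ => (Real.Gamma (q + 2))⁻¹ * F (q + 1))
      (nhdsWithin (-1) (Set.Ioi (-1))) (nhds (1 * φ 0)) := hΓ.mul (h1.comp hadd)
  rw [one_mul] at hmain
  refine Tendsto.congr' ?_ hmain
  filter_upwards [self_mem_nhdsWithin] with q hq
  simp only [Set.mem_Ioi] at hq
  have hq1 : (0:ℝ) < q + 1 := by linarith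
  rw [h2 _ hq1, show q + 1 - 1 = q from by ring,
    show q + 2 = (q + 1) + 1 from by ring, Real.Gamma_add_one hq1.ne', mul_inv]
  have hΓne : Real.Gamma (q + 1) ≠ 0 := (Real.Gamma_pos_of_pos hq1).ne'
  field_simp
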